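/- Let α be a real irrational such that α is equivalent to α/2 and equivalent to (α+1)/2. Then for every real irrational β equivalent to α, exactly two of the three numbers 2β, β/2, (β+1)/2 are equivalent to α. -/

import Mathlib

open Filter

/-- Partial quotients of the continued fraction expansion: `cfA α n` is `a_n(α)`. -/
noncomputable def cfA : ℝ → ℕ → ℤ
  | α, 0 => ⌊α⌋
  | α, n + 1 => cfA (Int.fract α)⁻¹ n

/-- `M(α) = sup_{n ≥ 1} a_n(α)` as an element of `ℕ∞`. -/
noncomputable def Mq (α : ℝ) : ℕ∞ := ⨆ n : ℕ, ((cfA α (n + 1)).toNat : ℕ∞)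

/-- `B(α) = limsup_{n → ∞} a_n(α)` as an element of `ℕ∞`. -/
noncomputable def Bq (α : ℝ) : ℕ∞ := limsup (fun n => ((cfA α n).toNat : ℕ∞)) atTop

/-- Distance from a real number to the nearest integer. -/
noncomputable def nearestDist (x : ℝ) : ℝ := |x - round x|

/-- Complete quotients of the continued fraction expansion. -/
noncomputable def cq (α : ℝ) : ℕ → ℝ
  | 0 => α
  | n + 1 => (Int.fract (cq α n))⁻¹

/-- Shifted convergent numerators: `cfP α (n+1) = p_n`, `cfP α 0 = p_{-1} = 1`. -/
noncomputable def cfP (α : ℝ) : ℕ → ℤ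
  | 0 => 1
  | 1 => ⌊α⌋
  | n + 2 => cfA α (n + 1) * cfP α (n + 1) + cfP α n

/-- Shifted convergent denominators: `cfQ α (n+1) = q_n`, `cfQ α 0 = q_{-1} = 0`. -/
noncomputable def cfQ (α : ℝ) : ℕ → ℤ
  | 0 => 0
  | 1 => 1
  | n + 2 => cfA α (n + 1) * cfQ α (n + 1) + cfQ α n

/-- Two reals are equivalent if related by an integer Möbius map of determinant `±1`. -/
def CfEquiv (x y : ℝ) : Prop :=
  ∃ a b c d : ℤ, (a * d - b * c = 1 ∨ a * d - b * c = -1) ∧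
    y = ((a : ℝ) * x + b) / ((c : ℝ) * x + d)

section Stmt9Aux

open Matrix

abbrev M2Z := Matrix (Fin 2) (Fin 2) ℤ
abbrev M2 := Matrix (Fin 2) (Fin 2) (ZMod 2)

noncomputable def bar (M : M2Z) : M2 := M.map (Int.castRingHom (ZMod 2))

lemma bar_mul (M N : M2Z) : bar (M * N) = bar M * bar N := Matrix.map_mul

lemma bar_one : bar 1 = 1 := Matrix.map_one _ (map_zero _) (map_one _)

/-- `y = Mx` with denominators cleared. -/
def MRel (M : M2Z) (x y : ℝ) : Prop :=
  (M 0 0 : ℝ) * x + M 0 1 = y * ((M 1 0 : ℝ) * x + M 1 1)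

lemma MRel_mul {M N : M2Z} {x y z : ℝ} (h1 : MRel M x y) (h2 : MRel N y z) :
    MRel (N * M) x z := by
  unfold MRel at *
  simp only [Matrix.mul_apply, Fin.sum_univ_two]
  push_cast
  linear_combination ((N 0 0 : ℝ) - z * N 1 0) * h1 + ((M 1 0 : ℝ) * x + M 1 1) * h2

lemma MRel_adj {M : M2Z} {x y : ℝ} (h : MRel M x y) : MRel (adjugate M) y x := by
  unfold MRel at *
  have hadj : adjugate M = !![M 1 1, -(M 0 1); -(M 1 0), M 0 0] := Matrix.adjugate_fin_two M
  rw [hadj]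
  show ((M 1 1 : ℤ) : ℝ) * y + ((-(M 0 1) : ℤ) : ℝ) =
    x * (((-(M 1 0) : ℤ) : ℝ) * y + ((M 0 0 : ℤ) : ℝ))
  push_cast
  linear_combination -h

lemma int_linear {x : ℝ} (hx : Irrational x) {p q : ℤ} (h : (p : ℝ) * x + q = 0) :
    p = 0 ∧ q = 0 := by
  by_cases hp : p = 0
  · refine ⟨hp, ?_⟩
    rw [hp] at h
    push_cast at h
    have : (q : ℝ) = 0 := by linarith
    exact_mod_cast this
  · exfalso
    have hxv : x = ((-q : ℤ) : ℝ) / ((p : ℤ) : ℝ) := by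
      have hpr : (p : ℝ) ≠ 0 := by exact_mod_cast hp
      field_simp
      push_cast
      linarith
    exact (irrational_iff_ne_rational x).mp hx (-q) p hp hxv

lemma denom_ne {x : ℝ} (hx : Irrational x) {c d : ℤ} (h : ¬(c = 0 ∧ d = 0)) :
    (c : ℝ) * x + d ≠ 0 := fun h0 => h ⟨(int_linear hx h0).1, (int_linear hx h0).2⟩

lemma cd_ne {M : M2Z} (hdet : M.det = 1 ∨ M.det = -1) : ¬(M 1 0 = 0 ∧ M 1 1 = 0) := by
  rintro ⟨h1, h2⟩
  rw [Matrix.det_fin_two, h1, h2] at hdet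
  simp at hdet

lemma rel_to_equiv {x y : ℝ} (hx : Irrational x) {M : M2Z}
    (hdet : M.det = 1 ∨ M.det = -1) (h : MRel M x y) : CfEquiv x y := by
  refine ⟨M 0 0, M 0 1, M 1 0, M 1 1, by rwa [Matrix.det_fin_two] at hdet, ?_⟩
  rw [eq_div_iff (denom_ne hx (cd_ne hdet))]
  exact h.symm

lemma equiv_to_rel {x y : ℝ} (hx : Irrational x) (h : CfEquiv x y) :
    ∃ M : M2Z, (M.det = 1 ∨ M.det = -1) ∧ MRel M x y := by
  obtain ⟨a, b, c, d, hdet, heq⟩ := h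
  refine ⟨!![a, b; c, d], by rwa [Matrix.det_fin_two_of], ?_⟩
  have hcd : ¬(c = 0 ∧ d = 0) := by
    rintro ⟨rfl, rfl⟩
    simp at hdet
  unfold MRel
  show ((a : ℤ) : ℝ) * x + ((b : ℤ) : ℝ) = y * (((c : ℤ) : ℝ) * x + ((d : ℤ) : ℝ))
  rw [heq, div_mul_cancel₀ _ (denom_ne hx hcd)]

/-- Integer matrices fixing a common irrational commute. -/
lemma fix_commute {x : ℝ} (hx : Irrational x) {M N : M2Z}
    (hM : MRel M x x) (hN : MRel N x x) : M * N = N * M := by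
  have scalar : ∀ P Q : M2Z, P 1 0 = 0 → P 1 1 = P 0 0 → P 0 1 = 0 → P * Q = Q * P := by
    intro P Q e1 e2 e3
    ext i j
    fin_cases i <;> fin_cases j <;>
      simp [Matrix.mul_apply, Fin.sum_univ_two, e1, e2, e3] <;> ring
  have hM' : (M 1 0 : ℝ) * x ^ 2 + ((M 1 1 : ℝ) - M 0 0) * x - M 0 1 = 0 := by
    unfold MRel at hM; linear_combination -hM
  have hN' : (N 1 0 : ℝ) * x ^ 2 + ((N 1 1 : ℝ) - N 0 0) * x - N 0 1 = 0 := by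
    unfold MRel at hN; linear_combination -hN
  by_cases hc : M 1 0 = 0
  · have hc' : ((M 1 0 : ℤ) : ℝ) = 0 := by exact_mod_cast hc
    have h1 : ((M 1 1 - M 0 0 : ℤ) : ℝ) * x + ((-(M 0 1) : ℤ) : ℝ) = 0 := by
      push_cast
      linear_combination hM' - x ^ 2 * hc'
    obtain ⟨e2, e3⟩ := int_linear hx h1
    exact scalar M N hc (by omega) (by omega)
  · by_cases hg : N 1 0 = 0
    · have hg' : ((N 1 0 : ℤ) : ℝ) = 0 := by exact_mod_cast hg
      have h1 : ((N 1 1 - N 0 0 : ℤ) : ℝ) * x + ((-(N 0 1) : ℤ) : ℝ) = 0 := by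
        push_cast
        linear_combination hN' - x ^ 2 * hg'
      obtain ⟨e2, e3⟩ := int_linear hx h1
      exact (scalar N M hg (by omega) (by omega)).symm
    · have h1 : ((N 1 0 * (M 1 1 - M 0 0) - M 1 0 * (N 1 1 - N 0 0) : ℤ) : ℝ) * x +
          ((M 1 0 * N 0 1 - N 1 0 * M 0 1 : ℤ) : ℝ) = 0 := by
        push_cast
        linear_combination (N 1 0 : ℝ) * hM' - (M 1 0 : ℝ) * hN'
      obtain ⟨R1, R2⟩ := int_linear hx h1
      ext i j
      fin_cases i <;> fin_cases j <;> simp [Matrix.mul_apply, Fin.sum_univ_two]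
      · linear_combination -R2
      · have key : M 1 0 * (M 0 0 * N 0 1 + M 0 1 * N 1 1) =
            M 1 0 * (N 0 0 * M 0 1 + N 0 1 * M 1 1) := by
          linear_combination (-(M 0 1)) * R1 + (M 0 0 - M 1 1) * R2
        exact mul_left_cancel₀ hc key
      · linear_combination R1
      · linear_combination R2

/-- `v` spans the mod-2 kernel line of some determinant-`±2` stabilizer of `α`. -/
def Stab2 (α : ℝ) (v : Fin 2 → ZMod 2) : Prop :=
  ∃ M : M2Z, MRel M α α ∧ (M.det = 2 ∨ M.det = -2) ∧ (bar M).mulVec v = 0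

lemma bar_ne_zero {M : M2Z} (hdet : M.det = 2 ∨ M.det = -2) : bar M ≠ 0 := by
  intro h0
  have hdvd : ∀ i j, (2 : ℤ) ∣ M i j := by
    intro i j
    have h1 : (bar M) i j = 0 := by rw [h0]; rfl
    have h2 : ((M i j : ℤ) : ZMod 2) = 0 := h1
    rwa [ZMod.intCast_zmod_eq_zero_iff_dvd] at h2
  rw [Matrix.det_fin_two] at hdet
  obtain ⟨a', ha⟩ := hdvd 0 0
  obtain ⟨b', hb⟩ := hdvd 0 1
  obtain ⟨c', hc⟩ := hdvd 1 0
  obtain ⟨d', hd⟩ := hdvd 1 1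
  rw [ha, hb, hc, hd] at hdet
  obtain ⟨t, ht⟩ : ∃ t, a' * d' - b' * c' = t := ⟨_, rfl⟩
  have h4 : ∀ s : ℤ, 2 * a' * (2 * d') - 2 * b' * (2 * c') = s → 4 * t = s := by
    intro s hs; rw [← ht]; linarith [hs]
  rcases hdet with h | h
  · have := h4 2 h; omega
  · have := h4 (-2) h; omega

set_option maxHeartbeats 1000000 in
set_option synthInstance.maxSize 2000 in
set_option synthInstance.maxHeartbeats 400000 in
lemma ker_small : ∀ P : M2, ∀ v w : Fin 2 → ZMod 2, P ≠ 0 → v ≠ 0 →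
    P.mulVec v = 0 → P.mulVec w = 0 → w = 0 ∨ w = v := by decide

set_option maxHeartbeats 1000000 in
set_option synthInstance.maxSize 2000 in
set_option synthInstance.maxHeartbeats 400000 in
lemma kills_all : ∀ P : M2, P.mulVec ![1,0] = 0 → P.mulVec ![0,1] = 0 → P = 0 := by decide

lemma not_all_three (α : ℝ) (hirr : Irrational α) :
    ¬(Stab2 α ![1,0] ∧ Stab2 α ![0,1] ∧ Stab2 α ![1,1]) := by
  rintro ⟨⟨M1, hr1, hd1, hk1⟩, ⟨M2, hr2, hd2, hk2⟩, ⟨M3, hr3, hd3, hk3⟩⟩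
  have hc12 : bar M1 * bar M2 = bar M2 * bar M1 := by
    rw [← bar_mul, ← bar_mul, fix_commute hirr hr1 hr2]
  have hc13 : bar M1 * bar M3 = bar M3 * bar M1 := by
    rw [← bar_mul, ← bar_mul, fix_commute hirr hr1 hr3]
  have hP1 : bar M1 ≠ 0 := bar_ne_zero hd1
  have hP2 : bar M2 ≠ 0 := bar_ne_zero hd2
  have hP3 : bar M3 ≠ 0 := bar_ne_zero hd3
  have hw : (bar M2).mulVec ((bar M1).mulVec ![0,1]) = 0 := by
    rw [Matrix.mulVec_mulVec, ← hc12, ← Matrix.mulVec_mulVec, hk2, Matrix.mulVec_zero]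
  have hu : (bar M3).mulVec ((bar M1).mulVec ![1,1]) = 0 := by
    rw [Matrix.mulVec_mulVec, ← hc13, ← Matrix.mulVec_mulVec, hk3, Matrix.mulVec_zero]
  have hw' := ker_small (bar M2) ![0,1] ((bar M1).mulVec ![0,1]) hP2 (by decide) hk2 hw
  have hu' := ker_small (bar M3) ![1,1] ((bar M1).mulVec ![1,1]) hP3 (by decide) hk3 hu
  have hsum : (bar M1).mulVec ![1,1] = (bar M1).mulVec ![1,0] + (bar M1).mulVec ![0,1] := by
    have hv : (![1,1] : Fin 2 → ZMod 2) = ![1,0] + ![0,1] := by decide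
    rw [hv, Matrix.mulVec_add]
  rw [hk1, zero_add] at hsum
  rcases hw' with hw0 | hwv
  · rw [hw0] at hsum
    exact hP1 (kills_all (bar M1) hk1 hw0)
  · rw [hwv] at hsum
    rcases hu' with hu0 | huv
    · rw [hsum] at hu0
      exact absurd hu0 (by decide)
    · rw [hsum] at huv
      exact absurd huv (by decide)

lemma bar_mul_adj {V : M2Z} (hV : V.det = 1 ∨ V.det = -1) :
    bar V * bar (adjugate V) = 1 := by
  rw [← bar_mul, Matrix.mul_adjugate]
  rcases hV with h | h
  · rw [h, one_smul, bar_one]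
  · rw [h]
    have hneg : (-1 : ℤ) • (1 : M2Z) = -1 := by simp
    rw [hneg]
    ext i j
    fin_cases i <;> fin_cases j <;>
      simp [bar, Matrix.one_apply] <;> decide

lemma mulVec_assoc (A B : M2) (v : Fin 2 → ZMod 2) :
    (A * B).mulVec v = A.mulVec (B.mulVec v) := (Matrix.mulVec_mulVec v A B).symm

/-- Generic coset lemma. -/
lemma iff_gen {α β γ : ℝ} (hα : Irrational α) (hγ : Irrational γ)
    {V T : M2Z} (hVdet : V.det = 1 ∨ V.det = -1) (hrelV : MRel V α β)
    (hrelT : MRel T β γ) (hdT : T.det = 2) {k : Fin 2 → ZMod 2}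
    (hk : (bar T).mulVec k = 0)
    (hcol : ∀ A : M2, A.mulVec k = 0 → A * bar (adjugate T) = 0) :
    CfEquiv γ α ↔ Stab2 α ((bar (adjugate V)).mulVec k) := by
  constructor
  · intro h
    obtain ⟨U, hUdet, hrelU⟩ := equiv_to_rel hγ h
    refine ⟨U * (T * V), MRel_mul (MRel_mul hrelV hrelT) hrelU, ?_, ?_⟩
    · rw [Matrix.det_mul, Matrix.det_mul, hdT]
      rcases hUdet with h1 | h1 <;> rcases hVdet with h2 | h2 <;> rw [h1, h2] <;> norm_num
    · have hin : bar V *ᵥ (bar (adjugate V) *ᵥ k) = k := by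
        rw [Matrix.mulVec_mulVec, bar_mul_adj hVdet, Matrix.one_mulVec]
      simp only [bar_mul, mulVec_assoc, hin, hk, Matrix.mulVec_zero]
  · rintro ⟨M, hrelM, hdetM, hker⟩
    set W := M * (adjugate V * adjugate T) with hWdef
    have hrelW : MRel W γ α :=
      MRel_mul (MRel_mul (MRel_adj hrelT) (MRel_adj hrelV)) hrelM
    have hdetW : W.det = 4 ∨ W.det = -4 := by
      rw [hWdef, Matrix.det_mul, Matrix.det_mul, Matrix.det_adjugate, Matrix.det_adjugate]
      have hcard : (Fintype.card (Fin 2) - 1) = 1 := rfl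
      rw [hcard, pow_one, pow_one, hdT]
      rcases hdetM with h1 | h1 <;> rcases hVdet with h2 | h2 <;> rw [h1, h2] <;> norm_num
    have hbarW : bar W = 0 := by
      rw [hWdef, ← Matrix.mul_assoc, bar_mul, bar_mul]
      refine hcol (bar M * bar (adjugate V)) ?_
      rw [mulVec_assoc]
      exact hker
    have hdvd : ∀ i j, (2 : ℤ) ∣ W i j := by
      intro i j
      have h1 : (bar W) i j = 0 := by rw [hbarW]; rfl
      have h2 : ((W i j : ℤ) : ZMod 2) = 0 := h1
      rwa [ZMod.intCast_zmod_eq_zero_iff_dvd] at h2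
    set U : M2Z := Matrix.of (fun i j => W i j / 2) with hUdef
    have hWU : ∀ i j, W i j = 2 * U i j := fun i j =>
      (Int.mul_ediv_cancel' (hdvd i j)).symm
    have hdetU : U.det = 1 ∨ U.det = -1 := by
      have h4 : W.det = 4 * U.det := by
        rw [Matrix.det_fin_two, Matrix.det_fin_two, hWU 0 0, hWU 0 1, hWU 1 0, hWU 1 1]
        ring
      rcases hdetW with h | h <;> rw [h4] at h <;> omega
    have hrelU : MRel U γ α := by
      unfold MRel at hrelW ⊢
      have e00 : ((W 0 0 : ℤ) : ℝ) = 2 * ((U 0 0 : ℤ) : ℝ) := by rw [hWU 0 0]; push_cast; ring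
      have e01 : ((W 0 1 : ℤ) : ℝ) = 2 * ((U 0 1 : ℤ) : ℝ) := by rw [hWU 0 1]; push_cast; ring
      have e10 : ((W 1 0 : ℤ) : ℝ) = 2 * ((U 1 0 : ℤ) : ℝ) := by rw [hWU 1 0]; push_cast; ring
      have e11 : ((W 1 1 : ℤ) : ℝ) = 2 * ((U 1 1 : ℤ) : ℝ) := by rw [hWU 1 1]; push_cast; ring
      rw [e00, e01, e10, e11] at hrelW
      linarith
    exact rel_to_equiv hγ hdetU hrelU

lemma equiv_symm {x y : ℝ} (hx : Irrational x) (hy : Irrational y) (h : CfEquiv x y) :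
    CfEquiv y x := by
  obtain ⟨M, hdet, hrel⟩ := equiv_to_rel hx h
  have hdet' : (adjugate M).det = 1 ∨ (adjugate M).det = -1 := by
    rw [Matrix.det_adjugate]
    have hcard : (Fintype.card (Fin 2) - 1) = 1 := rfl
    rwa [hcard, pow_one]
  exact rel_to_equiv hy hdet' (MRel_adj hrel)

lemma vec_cases : ∀ v : Fin 2 → ZMod 2, v = 0 ∨ v = ![1,0] ∨ v = ![0,1] ∨ v = ![1,1] := by
  decide

-- T1 = !![2,0;0,1] : β ↦ 2β
lemma relT1 (β : ℝ) : MRel !![2,0;0,1] β (2 * β) := by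
  unfold MRel
  show ((2:ℤ):ℝ) * β + ((0:ℤ):ℝ) = (2*β) * (((0:ℤ):ℝ) * β + ((1:ℤ):ℝ))
  push_cast; ring

lemma relT2 (β : ℝ) : MRel !![1,0;0,2] β (β / 2) := by
  unfold MRel
  show ((1:ℤ):ℝ) * β + ((0:ℤ):ℝ) = (β/2) * (((0:ℤ):ℝ) * β + ((2:ℤ):ℝ))
  push_cast; ring

lemma relT3 (β : ℝ) : MRel !![1,1;0,2] β ((β + 1) / 2) := by
  unfold MRel
  show ((1:ℤ):ℝ) * β + ((1:ℤ):ℝ) = ((β+1)/2) * (((0:ℤ):ℝ) * β + ((2:ℤ):ℝ))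
  push_cast; ring

lemma barT1 : bar !![2,0;0,1] = !![0,0;0,1] := by
  ext i j; fin_cases i <;> fin_cases j <;> simp [bar] <;> decide

lemma barT2 : bar !![1,0;0,2] = !![1,0;0,0] := by
  ext i j; fin_cases i <;> fin_cases j <;> simp [bar] <;> decide

lemma barT3 : bar !![1,1;0,2] = !![1,1;0,0] := by
  ext i j; fin_cases i <;> fin_cases j <;> simp [bar] <;> decide

lemma baradjT1 : bar (adjugate !![2,0;0,1]) = !![1,0;0,0] := by
  rw [Matrix.adjugate_fin_two_of]
  ext i j; fin_cases i <;> fin_cases j <;> simp [bar] <;> decide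

lemma baradjT2 : bar (adjugate !![1,0;0,2]) = !![0,0;0,1] := by
  rw [Matrix.adjugate_fin_two_of]
  ext i j; fin_cases i <;> fin_cases j <;> simp [bar] <;> decide

lemma baradjT3 : bar (adjugate !![1,1;0,2]) = !![0,1;0,1] := by
  rw [Matrix.adjugate_fin_two_of]
  ext i j; fin_cases i <;> fin_cases j <;> simp [bar] <;> decide

set_option maxHeartbeats 1000000 in
set_option synthInstance.maxSize 2000 in
set_option synthInstance.maxHeartbeats 400000 in
lemma col1 : ∀ A : M2, A.mulVec ![1,0] = 0 → A * !![1,0;0,0] = 0 := by decide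

set_option maxHeartbeats 1000000 in
set_option synthInstance.maxSize 2000 in
set_option synthInstance.maxHeartbeats 400000 in
lemma col2 : ∀ A : M2, A.mulVec ![0,1] = 0 → A * !![0,0;0,1] = 0 := by decide

set_option maxHeartbeats 1000000 in
set_option synthInstance.maxSize 2000 in
set_option synthInstance.maxHeartbeats 400000 in
lemma col3 : ∀ A : M2, A.mulVec ![1,1] = 0 → A * !![0,1;0,1] = 0 := by decide

lemma iff_T1 {α β : ℝ} (hα : Irrational α) (hβ : Irrational β) {V : M2Z}
    (hVdet : V.det = 1 ∨ V.det = -1) (hrelV : MRel V α β) :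
    CfEquiv (2 * β) α ↔ Stab2 α ((bar (adjugate V)).mulVec ![1,0]) := by
  have hγ : Irrational (2 * β) := by
    have h := hβ.intCast_mul (m := 2) (by norm_num)
    have : ((2:ℤ):ℝ) = 2 := by norm_num
    rwa [this] at h
  refine iff_gen hα hγ hVdet hrelV (relT1 β) (by rw [Matrix.det_fin_two_of]; norm_num)
    (by rw [barT1]; decide) ?_
  intro A hA
  rw [baradjT1]
  exact col1 A hA

lemma iff_T2 {α β : ℝ} (hα : Irrational α) (hβ : Irrational β) {V : M2Z}
    (hVdet : V.det = 1 ∨ V.det = -1) (hrelV : MRel V α β) :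
    CfEquiv (β / 2) α ↔ Stab2 α ((bar (adjugate V)).mulVec ![0,1]) := by
  have hγ : Irrational (β / 2) := by
    have h := hβ.div_intCast (m := 2) (by norm_num)
    have : ((2:ℤ):ℝ) = 2 := by norm_num
    rwa [this] at h
  refine iff_gen hα hγ hVdet hrelV (relT2 β) (by rw [Matrix.det_fin_two_of]; norm_num)
    (by rw [barT2]; decide) ?_
  intro A hA
  rw [baradjT2]
  exact col2 A hA

lemma iff_T3 {α β : ℝ} (hα : Irrational α) (hβ : Irrational β) {V : M2Z}
    (hVdet : V.det = 1 ∨ V.det = -1) (hrelV : MRel V α β) :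
    CfEquiv ((β + 1) / 2) α ↔ Stab2 α ((bar (adjugate V)).mulVec ![1,1]) := by
  have hβ1 : Irrational (β + 1) := by
    have h := hβ.add_intCast 1
    have : ((1:ℤ):ℝ) = 1 := by norm_num
    rwa [this] at h
  have hγ : Irrational ((β + 1) / 2) := by
    have h := hβ1.div_intCast (m := 2) (by norm_num)
    have : ((2:ℤ):ℝ) = 2 := by norm_num
    rwa [this] at h
  refine iff_gen hα hγ hVdet hrelV (relT3 β) (by rw [Matrix.det_fin_two_of]; norm_num)
    (by rw [barT3]; decide) ?_
  intro A hA
  rw [baradjT3]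
  exact col3 A hA

lemma rel_one (α : ℝ) : MRel (1 : M2Z) α α := by
  unfold MRel
  norm_num [Matrix.one_apply]


end Stmt9Aux

/-- If `α ∼ α/2` and `α ∼ (α+1)/2`, then for each irrational `β ∼ α` exactly two of the
three numbers `2β`, `β/2`, `(β+1)/2` are equivalent to `α`. -/
theorem stmt9 (α : ℝ) (hirr : Irrational α)
    (h1 : CfEquiv α (α / 2)) (h2 : CfEquiv α ((α + 1) / 2)) :
    ∀ β : ℝ, Irrational β → CfEquiv α β →
      ((CfEquiv (2 * β) α ∧ CfEquiv (β / 2) α ∧ ¬ CfEquiv ((β + 1) / 2) α) ∨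
       (CfEquiv (2 * β) α ∧ ¬ CfEquiv (β / 2) α ∧ CfEquiv ((β + 1) / 2) α) ∨
       (¬ CfEquiv (2 * β) α ∧ CfEquiv (β / 2) α ∧ CfEquiv ((β + 1) / 2) α)) := by
  intro β hβ hab
  obtain ⟨V, hVdet, hrelV⟩ := equiv_to_rel hirr hab
  -- irrationality facts
  have hhalf : Irrational (α / 2) := by
    have h := hirr.div_intCast (m := 2) (by norm_num)
    have h2' : ((2:ℤ):ℝ) = 2 := by norm_num
    rwa [h2'] at h
  have hα1 : Irrational (α + 1) := by
    have h := hirr.add_intCast 1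
    have h1' : ((1:ℤ):ℝ) = 1 := by norm_num
    rwa [h1'] at h
  have hhalf1 : Irrational ((α + 1) / 2) := by
    have h := hα1.div_intCast (m := 2) (by norm_num)
    have h2' : ((2:ℤ):ℝ) = 2 := by norm_num
    rwa [h2'] at h
  -- base stabilizer facts from h1, h2 (taking V = 1)
  have honedet : (1 : M2Z).det = 1 ∨ (1 : M2Z).det = -1 := Or.inl Matrix.det_one
  have hadj1 : bar (Matrix.adjugate (1 : M2Z)) = 1 := by rw [Matrix.adjugate_one, bar_one]
  have hS2 : Stab2 α ![0,1] := by
    have h := (iff_T2 hirr hirr honedet (rel_one α)).mp (equiv_symm hirr hhalf h1)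
    rwa [hadj1, Matrix.one_mulVec] at h
  have hS3 : Stab2 α ![1,1] := by
    have h := (iff_T3 hirr hirr honedet (rel_one α)).mp (equiv_symm hirr hhalf1 h2)
    rwa [hadj1, Matrix.one_mulVec] at h
  have hnot1 : ¬ Stab2 α ![1,0] := fun h => not_all_three α hirr ⟨h, hS2, hS3⟩
  -- the three lines attached to β
  set w : (Fin 2 → ZMod 2) → (Fin 2 → ZMod 2) := fun k => (bar (Matrix.adjugate V)).mulVec k with hw
  have hrec : ∀ k, (bar V).mulVec (w k) = k := by
    intro k
    rw [hw, Matrix.mulVec_mulVec, bar_mul_adj hVdet, Matrix.one_mulVec]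
  have hne : ∀ k, k ≠ 0 → w k ≠ 0 := by
    intro k hk h0
    apply hk
    rw [← hrec k, h0, Matrix.mulVec_zero]
  have hinj : ∀ k k', w k = w k' → k = k' := by
    intro k k' hkk
    rw [← hrec k, ← hrec k', hkk]
  have i1 : CfEquiv (2 * β) α ↔ Stab2 α (w ![1,0]) := iff_T1 hirr hβ hVdet hrelV
  have i2 : CfEquiv (β / 2) α ↔ Stab2 α (w ![0,1]) := iff_T2 hirr hβ hVdet hrelV
  have i3 : CfEquiv ((β + 1) / 2) α ↔ Stab2 α (w ![1,1]) := iff_T3 hirr hβ hVdet hrelV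
  -- Stab2 at a nonzero vector holds iff the vector is not ![1,0]
  have hSw : ∀ v : Fin 2 → ZMod 2, v ≠ 0 → (Stab2 α v ↔ v ≠ ![1,0]) := by
    intro v hv
    constructor
    · intro hs heq
      rw [heq] at hs
      exact hnot1 hs
    · intro hne'
      rcases vec_cases v with h | h | h | h
      · exact absurd h hv
      · exact absurd h hne'
      · rw [h]; exact hS2
      · rw [h]; exact hS3
  have j1 : CfEquiv (2 * β) α ↔ w ![1,0] ≠ ![1,0] :=
    i1.trans (hSw _ (hne _ (by decide)))
  have j2 : CfEquiv (β / 2) α ↔ w ![0,1] ≠ ![1,0] :=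
    i2.trans (hSw _ (hne _ (by decide)))
  have j3 : CfEquiv ((β + 1) / 2) α ↔ w ![1,1] ≠ ![1,0] :=
    i3.trans (hSw _ (hne _ (by decide)))
  -- exactly one of w k1, w k2, w k3 equals ![1,0]
  rcases (vec_cases (w ![1,0])).resolve_left (hne _ (by decide)) with c1 | c1 | c1
  · -- w k1 = ![1,0]: cases 2 and 3 hold, case 1 fails
    refine Or.inr (Or.inr ⟨fun h => (j1.mp h) c1, ?_, ?_⟩)
    · refine j2.mpr fun h => ?_
      have := hinj _ _ (c1.symm ▸ h : w ![0,1] = w ![1,0])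
      exact absurd this (by decide)
    · refine j3.mpr fun h => ?_
      have := hinj _ _ (c1.symm ▸ h : w ![1,1] = w ![1,0])
      exact absurd this (by decide)
  all_goals (
    have hc1 : CfEquiv (2 * β) α := j1.mpr (by rw [c1]; decide)
    rcases (vec_cases (w ![0,1])).resolve_left (hne _ (by decide)) with c2 | c2 | c2)
  -- c1 : w k1 = ![0,1]
  · -- w k2 = ![1,0] : case 1 and 3 hold
    refine Or.inr (Or.inl ⟨hc1, fun h => (j2.mp h) c2, ?_⟩)
    refine j3.mpr fun h => ?_
    have := hinj _ _ (c2.symm ▸ h : w ![1,1] = w ![0,1])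
    exact absurd this (by decide)
  · exact absurd (hinj _ _ (c1.trans c2.symm)) (by decide)
  · -- w k1 = ![0,1], w k2 = ![1,1]: then w k3 = ![1,0]
    have hc2 : CfEquiv (β / 2) α := j2.mpr (by rw [c2]; decide)
    have c3 : w ![1,1] = ![1,0] := by
      rcases (vec_cases (w ![1,1])).resolve_left (hne _ (by decide)) with c3 | c3 | c3
      · exact c3
      · exact absurd (hinj _ _ (c3.trans c1.symm)) (by decide)
      · exact absurd (hinj _ _ (c3.trans c2.symm)) (by decide)
    exact Or.inl ⟨hc1, hc2, fun h => (j3.mp h) c3⟩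
  -- c1 : w k1 = ![1,1]
  · refine Or.inr (Or.inl ⟨hc1, fun h => (j2.mp h) c2, ?_⟩)
    refine j3.mpr fun h => ?_
    have := hinj _ _ (c2.symm ▸ h : w ![1,1] = w ![0,1])
    exact absurd this (by decide)
  · have hc2 : CfEquiv (β / 2) α := j2.mpr (by rw [c2]; decide)
    have c3 : w ![1,1] = ![1,0] := by
      rcases (vec_cases (w ![1,1])).resolve_left (hne _ (by decide)) with c3 | c3 | c3
      · exact c3
      · exact absurd (hinj _ _ (c3.trans c2.symm)) (by decide)
      · exact absurd (hinj _ _ (c3.trans c1.symm)) (by decide)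
    exact Or.inl ⟨hc1, hc2, fun h => (j3.mp h) c3⟩
  · exact absurd (hinj _ _ (c1.trans c2.symm)) (by decide)
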